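/- Let F : ℝ → ℝ be continuous with b ≤ F(y) ≤ M for all y (where 0 < b ≤ M), let x solve x'(t) = F(x(t)), x(0) = x₀, on [0,T], and let Y be absolutely continuous with Y(0) = x₀ and F(Y(t)) − r ≤ Y'(t) ≤ F(Y(t)) + r for a.e. t ∈ [0,T], for some r ≥ 0. Then sup_{0≤t≤T} |Y(t) − x(t)| ≤ M T r / b. -/

import Mathlib

open MeasureTheory

/-- Difference of primitives of a continuous function bounded between `l` and `u`. -/
lemma G_sub_bounds {φ : ℝ → ℝ} {l u : ℝ} (hφc : Continuous φ)
    (hl : ∀ y, l ≤ φ y) (hu : ∀ y, φ y ≤ u) (x₀ w v : ℝ) (hwv : w ≤ v) :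
    (v - w) * l ≤ (∫ y in x₀..v, φ y) - ∫ y in x₀..w, φ y ∧
      (∫ y in x₀..v, φ y) - ∫ y in x₀..w, φ y ≤ (v - w) * u := by
  have h1 : (∫ y in x₀..v, φ y) - ∫ y in x₀..w, φ y = ∫ y in w..v, φ y :=
    intervalIntegral.integral_interval_sub_left (hφc.intervalIntegrable _ _)
      (hφc.intervalIntegrable _ _)
  rw [h1]
  constructor
  · have := intervalIntegral.integral_mono_on (μ := volume) (f := fun _ => l) (g := φ) hwv
      intervalIntegrable_const (hφc.intervalIntegrable _ _) (fun y _ => hl y)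
    simpa [smul_eq_mul, mul_comm] using this
  · have := intervalIntegral.integral_mono_on (μ := volume) (f := φ) (g := fun _ => u) hwv
      (hφc.intervalIntegrable _ _) intervalIntegrable_const (fun y _ => hu y)
    simpa [smul_eq_mul, mul_comm] using this

theorem perturbed_ode_comparison
    (F : ℝ → ℝ) (b M T r x₀ : ℝ) (hb : 0 < b) (hbM : b ≤ M) (hT : 0 < T)
    (hr : 0 ≤ r) (hF : Continuous F) (hFb : ∀ y, b ≤ F y) (hFM : ∀ y, F y ≤ M)
    (x Y : ℝ → ℝ) (g : ℝ → ℝ)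
    (hx0 : x 0 = x₀)
    (hx : ∀ t ∈ Set.Icc (0 : ℝ) T, HasDerivAt x (F (x t)) t)
    (hg : IntervalIntegrable g volume 0 T)
    (hY : ∀ t ∈ Set.Icc (0 : ℝ) T, Y t = x₀ + ∫ s in (0 : ℝ)..t, g s)
    (hgbd : ∀ᵐ s ∂volume, s ∈ Set.Icc (0 : ℝ) T →
      F (Y s) - r ≤ g s ∧ g s ≤ F (Y s) + r) :
    ∀ t ∈ Set.Icc (0 : ℝ) T, |Y t - x t| ≤ M * T * r / b := by
  have hM : 0 < M := hb.trans_le hbM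
  have hFpos : ∀ y, 0 < F y := fun y => hb.trans_le (hFb y)
  have hFne : ∀ y, F y ≠ 0 := fun y => (hFpos y).ne'
  set φ : ℝ → ℝ := fun y => (F y)⁻¹ with hφdef
  have hφc : Continuous φ := hF.inv₀ hFne
  have hφl : ∀ y, M⁻¹ ≤ φ y := fun y => inv_anti₀ (hFpos y) (hFM y)
  have hφu : ∀ y, φ y ≤ b⁻¹ := fun y => inv_anti₀ hb (hFb y)
  have hφpos : ∀ y, 0 < φ y := fun y => inv_pos.2 (hFpos y)
  set G : ℝ → ℝ := fun z => ∫ y in x₀..z, φ y with hGdef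
  have hGd : ∀ z, HasDerivAt G (φ z) z := fun z =>
    (hφc.integral_hasStrictDerivAt x₀ z).hasDerivAt
  -- bilipschitz bounds for G
  have hGlow : ∀ w v : ℝ, |w - v| ≤ M * |G w - G v| := by
    have key : ∀ w v : ℝ, w ≤ v → v - w ≤ M * (G v - G w) := by
      intro w v h
      have h1 := (G_sub_bounds hφc hφl hφu x₀ w v h).1
      calc v - w = (v - w) * M⁻¹ * M := by field_simp
        _ ≤ (G v - G w) * M := mul_le_mul_of_nonneg_right h1 hM.le
        _ = M * (G v - G w) := mul_comm _ _
    intro w v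
    rcases le_total w v with h | h
    · have h1 := (G_sub_bounds hφc hφl hφu x₀ w v h).1
      have hG0 : 0 ≤ G v - G w := le_trans (mul_nonneg (sub_nonneg.2 h) (by positivity)) h1
      rw [abs_sub_comm w v, abs_sub_comm (G w) (G v),
        abs_of_nonneg (sub_nonneg.2 h), abs_of_nonneg hG0]
      exact key w v h
    · have h1 := (G_sub_bounds hφc hφl hφu x₀ v w h).1
      have hG0 : 0 ≤ G w - G v := le_trans (mul_nonneg (sub_nonneg.2 h) (by positivity)) h1
      rw [abs_of_nonneg (sub_nonneg.2 h), abs_of_nonneg hG0]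
      exact key v w h
  have hGup : ∀ w v : ℝ, |G w - G v| ≤ |w - v| * b⁻¹ := by
    intro w v
    rcases le_total w v with h | h
    · obtain ⟨h1, h2⟩ := G_sub_bounds hφc hφl hφu x₀ w v h
      have hG0 : 0 ≤ G v - G w := le_trans (mul_nonneg (sub_nonneg.2 h) (by positivity)) h1
      rw [abs_sub_comm (G w) (G v), abs_sub_comm w v,
        abs_of_nonneg hG0, abs_of_nonneg (sub_nonneg.2 h)]
      exact h2
    · obtain ⟨h1, h2⟩ := G_sub_bounds hφc hφl hφu x₀ v w h
      have hG0 : 0 ≤ G w - G v := le_trans (mul_nonneg (sub_nonneg.2 h) (by positivity)) h1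
      rw [abs_of_nonneg hG0, abs_of_nonneg (sub_nonneg.2 h)]
      exact h2
  -- the truncated g and the globally defined Z
  set gh : ℝ → ℝ := (Set.Ioc (0:ℝ) T).indicator g with hghdef
  have hghint : Integrable gh volume := (hg.1).integrable_indicator measurableSet_Ioc
  set Z : ℝ → ℝ := fun t => x₀ + ∫ s in (0:ℝ)..t, gh s with hZdef
  have hZcont : Continuous Z := continuous_const.add (hghint.continuous_primitive 0)
  have hZY : ∀ t ∈ Set.Icc (0:ℝ) T, Z t = Y t := by
    intro t ht
    rw [hY t ht]
    have h0t : (0:ℝ) ≤ t := ht.1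
    simp only [hZdef]
    congr 1
    rw [intervalIntegral.integral_of_le h0t, intervalIntegral.integral_of_le h0t,
      hghdef, MeasureTheory.setIntegral_indicator measurableSet_Ioc,
      Set.inter_eq_left.2 (Set.Ioc_subset_Ioc le_rfl ht.2)]
  -- Step A : G (x t) = t on [0,T]
  have hGx : ∀ t ∈ Set.Icc (0:ℝ) T, G (x t) = t := by
    intro t ht
    have hsub : Set.uIcc (0:ℝ) t ⊆ Set.Icc 0 T := by
      rw [Set.uIcc_of_le ht.1]
      exact Set.Icc_subset_Icc le_rfl ht.2
    have hder : ∀ s ∈ Set.uIcc (0:ℝ) t, HasDerivAt (fun τ => G (x τ)) 1 s := by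
      intro s hs
      have hxs := hx s (hsub hs)
      have hcomp := (hGd (x s)).comp s hxs
      have hval : φ (x s) * F (x s) = 1 := by
        simp only [hφdef]
        exact inv_mul_cancel₀ (hFne _)
      rw [hval] at hcomp
      exact hcomp
    have hid := intervalIntegral.integral_eq_sub_of_hasDerivAt
      (f' := fun _ => (1:ℝ)) hder intervalIntegrable_const
    simp only [intervalIntegral.integral_const, smul_eq_mul, mul_one, sub_zero] at hid
    have hGx0 : G (x 0) = 0 := by
      rw [hx0]
      simp only [hGdef]
      exact intervalIntegral.integral_same
    linarith
  -- a.e. pointwise bound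
  have hbd2 : ∀ᵐ s ∂volume, s ∈ Set.Ioc (0:ℝ) T → |gh s * φ (Z s) - 1| ≤ r * b⁻¹ := by
    filter_upwards [hgbd] with s hs hsIoc
    have hsIcc : s ∈ Set.Icc (0:ℝ) T := Set.Ioc_subset_Icc_self hsIoc
    have h1 : gh s = g s := Set.indicator_of_mem hsIoc g
    have h2 : Z s = Y s := hZY s hsIcc
    obtain ⟨hl', hu'⟩ := hs hsIcc
    have e1 : gh s * φ (Z s) - 1 = (g s - F (Y s)) * φ (Y s) := by
      rw [h1, h2]
      simp only [hφdef]
      rw [sub_mul, mul_inv_cancel₀ (hFne _)]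
    rw [e1, abs_mul, abs_of_nonneg (hφpos _).le]
    exact mul_le_mul (abs_le.2 ⟨by linarith, by linarith⟩) (hφu _) (hφpos _).le hr
  -- integrability
  have hφZc : Continuous fun s => φ (Z s) := hφc.comp hZcont
  have hint1 : Integrable (fun s => gh s * φ (Z s)) volume := by
    have h := hghint.bdd_mul (c := b⁻¹) hφZc.aestronglyMeasurable
      (ae_of_all _ fun s => by
        rw [Real.norm_eq_abs, abs_of_nonneg (hφpos _).le]; exact hφu _)
    simpa [mul_comm] using h
  -- Step B: key identity
  have hkey : ∀ t ∈ Set.Icc (0:ℝ) T, G (Z t) = ∫ s in (0:ℝ)..t, gh s * φ (Z s) := by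
    intro t ht
    have h0t : (0:ℝ) ≤ t := ht.1
    have habs : ∀ ε : ℝ, 0 < ε →
        |G (Z t) - ∫ s in (0:ℝ)..t, gh s * φ (Z s)| ≤ ε := by
      intro ε hε
      obtain ⟨C, hC⟩ := (isCompact_Icc :
        IsCompact (Set.Icc (0:ℝ) T)).exists_bound_of_continuousOn hZcont.continuousOn
      set K : Set ℝ := Set.Icc (-(C+1)) (C+1) with hKdef
      have hφuc := (isCompact_Icc : IsCompact K).uniformContinuousOn_of_continuous
        hφc.continuousOn
      rw [Metric.uniformContinuousOn_iff] at hφuc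
      set I₀ : ℝ := ∫ s, |gh s| with hI₀def
      have hI₀ : 0 ≤ I₀ := integral_nonneg fun s => abs_nonneg _
      set e2 : ℝ := ε / (2 * (I₀ + 1)) with he2def
      have he2 : 0 < e2 := by positivity
      obtain ⟨δ₂, hδ₂, hδ₂p⟩ := hφuc e2 he2
      set δ : ℝ := min 1 (min (δ₂/2) (b*ε/8)) with hδdef
      have hδpos : 0 < δ := lt_min one_pos (lt_min (by positivity) (by positivity))
      obtain ⟨g', hg'supp, hg'close, hg'cont, hg'int⟩ :=
        hghint.exists_hasCompactSupport_integral_sub_le hδpos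
      set Y' : ℝ → ℝ := fun u => x₀ + ∫ s in (0:ℝ)..u, g' s with hY'def
      have hY'd : ∀ s : ℝ, HasDerivAt Y' (g' s) s := fun s =>
        ((hg'cont.integral_hasStrictDerivAt 0 s).hasDerivAt).const_add x₀
      have hY'c : Continuous Y' := continuous_const.add (hg'int.continuous_primitive 0)
      have hg'cl : ∫ s, |gh s - g' s| ≤ δ := by
        simpa [Real.norm_eq_abs] using hg'close
      -- uniform closeness of Z and Y'
      have hclose : ∀ u : ℝ, 0 ≤ u → |Z u - Y' u| ≤ δ := by
        intro u hu
        have hsub : Z u - Y' u = ∫ s in (0:ℝ)..u, (gh s - g' s) := by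
          simp only [hZdef, hY'def]
          rw [intervalIntegral.integral_sub hghint.intervalIntegrable
            hg'int.intervalIntegrable]
          ring
        rw [hsub]
        calc |∫ s in (0:ℝ)..u, (gh s - g' s)|
            ≤ ∫ s in (0:ℝ)..u, |gh s - g' s| :=
              intervalIntegral.abs_integral_le_integral_abs hu
          _ = ∫ s in Set.Ioc (0:ℝ) u, |gh s - g' s| :=
              intervalIntegral.integral_of_le hu
          _ ≤ ∫ s, |gh s - g' s| :=
              setIntegral_le_integral (hghint.sub hg'int).abs
                (ae_of_all _ fun s => abs_nonneg _)
          _ ≤ δ := hg'cl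
      -- membership of K
      have hZK : ∀ s ∈ Set.Icc (0:ℝ) t, Z s ∈ K := by
        intro s hs
        have hs' : s ∈ Set.Icc (0:ℝ) T := ⟨hs.1, hs.2.trans ht.2⟩
        have h' := abs_le.1 (by simpa [Real.norm_eq_abs] using hC s hs')
        exact ⟨by linarith [h'.1], by linarith [h'.2]⟩
      have hY'K : ∀ s ∈ Set.Icc (0:ℝ) t, Y' s ∈ K := by
        intro s hs
        have hs' : s ∈ Set.Icc (0:ℝ) T := ⟨hs.1, hs.2.trans ht.2⟩
        have h' := abs_le.1 (by simpa [Real.norm_eq_abs] using hC s hs')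
        have h4 := abs_le.1 (hclose s hs.1)
        have hδ1 : δ ≤ 1 := min_le_left _ _
        exact ⟨by linarith [h'.1, h4.1], by linarith [h'.2, h4.2]⟩
      -- φ values close
      have hφclose : ∀ s ∈ Set.Icc (0:ℝ) t, |φ (Y' s) - φ (Z s)| ≤ e2 := by
        intro s hs
        have hdd : dist (Z s) (Y' s) < δ₂ := by
          rw [Real.dist_eq]
          have hh : δ ≤ δ₂ / 2 := (min_le_right _ _).trans (min_le_left _ _)
          linarith [hclose s hs.1]
        have h := hδ₂p (Z s) (hZK s hs) (Y' s) (hY'K s hs) hdd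
        rw [Real.dist_eq, abs_sub_comm] at h
        exact h.le
      -- substitution identity for Y'
      have hsubid : (∫ s in (0:ℝ)..t, φ (Y' s) * g' s) = G (Y' t) := by
        have h0 : Y' 0 = x₀ := by simp [hY'def]
        have h := intervalIntegral.integral_comp_mul_deriv (a := (0:ℝ)) (b := t) (f := Y') (f' := g') (g := φ)
          (fun s _ => hY'd s) hg'cont.continuousOn hφc
        rw [h0] at h
        simpa [Function.comp, hGdef] using h
      -- estimates
      have est1 : |G (Z t) - G (Y' t)| ≤ δ * b⁻¹ :=
        (hGup _ _).trans (mul_le_mul_of_nonneg_right (hclose t h0t) (by positivity))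
      have hint2 : IntervalIntegrable (fun s => φ (Y' s) * g' s) volume 0 t :=
        ((hφc.comp hY'c).mul hg'cont).intervalIntegrable _ _
      have hrhsint : IntervalIntegrable
          (fun s => |g' s - gh s| * b⁻¹ + |gh s| * e2) volume 0 t :=
        (((hg'int.sub hghint).abs.mul_const b⁻¹).add
          (hghint.abs.mul_const e2)).intervalIntegrable
      have est2 : |(∫ s in (0:ℝ)..t, φ (Y' s) * g' s) -
          ∫ s in (0:ℝ)..t, gh s * φ (Z s)| ≤ δ * b⁻¹ + e2 * I₀ := by
        rw [← intervalIntegral.integral_sub hint2 hint1.intervalIntegrable]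
        have hptwise : ∀ s ∈ Set.Icc (0:ℝ) t,
            |φ (Y' s) * g' s - gh s * φ (Z s)| ≤ |g' s - gh s| * b⁻¹ + |gh s| * e2 := by
          intro s hs
          have hsplit : φ (Y' s) * g' s - gh s * φ (Z s)
              = φ (Y' s) * (g' s - gh s) + gh s * (φ (Y' s) - φ (Z s)) := by ring
          rw [hsplit]
          refine (abs_add_le _ _).trans ?_
          rw [abs_mul, abs_mul, abs_of_nonneg (hφpos _).le]
          refine add_le_add ?_ ?_
          · rw [mul_comm (φ (Y' s))]
            exact mul_le_mul_of_nonneg_left (hφu _) (abs_nonneg _)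
          · exact mul_le_mul_of_nonneg_left (hφclose s hs) (abs_nonneg _)
        calc |∫ s in (0:ℝ)..t, (φ (Y' s) * g' s - gh s * φ (Z s))|
            ≤ ∫ s in (0:ℝ)..t, |φ (Y' s) * g' s - gh s * φ (Z s)| :=
              intervalIntegral.abs_integral_le_integral_abs h0t
          _ ≤ ∫ s in (0:ℝ)..t, (|g' s - gh s| * b⁻¹ + |gh s| * e2) :=
              intervalIntegral.integral_mono_on h0t
                (hint2.sub hint1.intervalIntegrable).abs hrhsint hptwise
          _ = (∫ s in (0:ℝ)..t, |g' s - gh s| * b⁻¹) +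
              ∫ s in (0:ℝ)..t, |gh s| * e2 :=
              intervalIntegral.integral_add
                ((hg'int.sub hghint).abs.mul_const b⁻¹).intervalIntegrable
                (hghint.abs.mul_const e2).intervalIntegrable
          _ ≤ δ * b⁻¹ + e2 * I₀ := by
              have hb1 : (∫ s in (0:ℝ)..t, |g' s - gh s| * b⁻¹)
                  = (∫ s in (0:ℝ)..t, |g' s - gh s|) * b⁻¹ :=
                intervalIntegral.integral_mul_const _ _
              have hb2 : (∫ s in (0:ℝ)..t, |gh s| * e2)
                  = (∫ s in (0:ℝ)..t, |gh s|) * e2 :=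
                intervalIntegral.integral_mul_const _ _
              have hb3 : (∫ s in (0:ℝ)..t, |g' s - gh s|) ≤ δ := by
                rw [intervalIntegral.integral_of_le h0t]
                refine le_trans (setIntegral_le_integral (hg'int.sub hghint).abs
                  (ae_of_all _ fun s => abs_nonneg _)) ?_
                calc (∫ s, |g' s - gh s|) = ∫ s, |gh s - g' s| := by
                      simp_rw [abs_sub_comm]
                  _ ≤ δ := hg'cl
              have hb4 : (∫ s in (0:ℝ)..t, |gh s|) ≤ I₀ := by
                rw [intervalIntegral.integral_of_le h0t]
                exact setIntegral_le_integral hghint.abs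
                  (ae_of_all _ fun s => abs_nonneg _)
              have hnn : (0:ℝ) ≤ ∫ s in (0:ℝ)..t, |g' s - gh s| :=
                intervalIntegral.integral_nonneg h0t fun s _ => abs_nonneg _
              have hnn2 : (0:ℝ) ≤ ∫ s in (0:ℝ)..t, |gh s| :=
                intervalIntegral.integral_nonneg h0t fun s _ => abs_nonneg _
              rw [hb1, hb2]
              have hx1 : (∫ s in (0:ℝ)..t, |g' s - gh s|) * b⁻¹ ≤ δ * b⁻¹ :=
                mul_le_mul_of_nonneg_right hb3 (by positivity)
              have hx2 : (∫ s in (0:ℝ)..t, |gh s|) * e2 ≤ I₀ * e2 :=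
                mul_le_mul_of_nonneg_right hb4 he2.le
              linarith [hx1, hx2, mul_comm I₀ e2]
      -- combine
      have hδb : δ * b⁻¹ ≤ ε / 8 := by
        have hδ3 : δ ≤ b * ε / 8 := (min_le_right _ _).trans (min_le_right _ _)
        have : b * ε / 8 * b⁻¹ = ε / 8 := by field_simp
        calc δ * b⁻¹ ≤ b * ε / 8 * b⁻¹ :=
              mul_le_mul_of_nonneg_right hδ3 (by positivity)
          _ = ε / 8 := this
      have he2I : e2 * I₀ ≤ ε / 2 := by
        rw [he2def, div_mul_eq_mul_div, div_le_div_iff₀ (by positivity) (by norm_num : (0:ℝ) < 2)]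
        nlinarith
      calc |G (Z t) - ∫ s in (0:ℝ)..t, gh s * φ (Z s)|
          ≤ |G (Z t) - G (Y' t)| +
            |G (Y' t) - ∫ s in (0:ℝ)..t, gh s * φ (Z s)| := abs_sub_le _ _ _
        _ ≤ δ * b⁻¹ + (δ * b⁻¹ + e2 * I₀) := by
            refine add_le_add est1 ?_
            rw [← hsubid]
            exact est2
        _ ≤ ε := by linarith
    by_contra hne
    have hpos : 0 < |G (Z t) - ∫ s in (0:ℝ)..t, gh s * φ (Z s)| := by
      rcases (abs_nonneg (G (Z t) - ∫ s in (0:ℝ)..t, gh s * φ (Z s))).lt_or_eq with h | h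
      · exact h
      · exact absurd (sub_eq_zero.1 (abs_eq_zero.1 h.symm)) hne
    linarith [habs (|G (Z t) - ∫ s in (0:ℝ)..t, gh s * φ (Z s)| / 2) (by linarith)]
  -- Step C
  have hC2 : ∀ t ∈ Set.Icc (0:ℝ) T,
      |(∫ s in (0:ℝ)..t, gh s * φ (Z s)) - t| ≤ T * r * b⁻¹ := by
    intro t ht
    have h0t : (0:ℝ) ≤ t := ht.1
    have e : (∫ s in (0:ℝ)..t, gh s * φ (Z s)) - t
        = ∫ s in (0:ℝ)..t, (gh s * φ (Z s) - 1) := by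
      rw [intervalIntegral.integral_sub hint1.intervalIntegrable
        intervalIntegrable_const]
      simp
    rw [e]
    have habs2 : |∫ s in (0:ℝ)..t, (gh s * φ (Z s) - 1)|
        ≤ ∫ s in (0:ℝ)..t, |gh s * φ (Z s) - 1| :=
      intervalIntegral.abs_integral_le_integral_abs h0t
    refine habs2.trans ?_
    rw [intervalIntegral.integral_of_le h0t]
    have hmono := setIntegral_mono_on_ae (μ := volume) (s := Set.Ioc (0:ℝ) t)
      (f := fun s => |gh s * φ (Z s) - 1|) (g := fun _ => r * b⁻¹)
      ((hint1.integrableOn.sub (integrableOn_const measure_Ioc_lt_top.ne)).abs)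
      (integrableOn_const measure_Ioc_lt_top.ne)
      measurableSet_Ioc ?_
    · refine hmono.trans ?_
      rw [setIntegral_const, smul_eq_mul, Real.volume_real_Ioc_of_le h0t]
      have : t - 0 ≤ T := by linarith [ht.2]
      nlinarith [inv_pos.2 hb, mul_nonneg hr (inv_pos.2 hb).le]
    · filter_upwards [hbd2] with s hbnd hs
      exact hbnd ⟨hs.1, hs.2.trans ht.2⟩
  -- assembly
  intro t ht
  rw [← hZY t ht]
  calc |Z t - x t| ≤ M * |G (Z t) - G (x t)| := hGlow _ _
    _ = M * |(∫ s in (0:ℝ)..t, gh s * φ (Z s)) - t| := by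
        rw [hGx t ht, hkey t ht]
    _ ≤ M * (T * r * b⁻¹) := mul_le_mul_of_nonneg_left (hC2 t ht) hM.le
    _ = M * T * r / b := by field_simp
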